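/- arXiv:1802.07163 — 5 statements merged into one kernel-verified Lean document; each statement's English description precedes it below -/
import Mathlib

section
/- Let μ and ν be probability measures on ℝ^d with bounded support, with μ absolutely continuous with respect to Lebesgue measure. Suppose f : ℝ^d → ℝ^d is measurable, satisfies Measure.map f μ = ν, and f(x) = ∇φ(x) for all x, where φ : ℝ^d → ℝ is convex and differentiable. Then f minimizes the quadratic Monge cost: for every measurable g : ℝ^d → ℝ^d with Measure.map g μ = ν, one has ∫ ‖x − f(x)‖² dμ(x) ≤ ∫ ‖x − g(x)‖² dμ(x). -/
open MeasureTheory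
open scoped RealInnerProductSpace

lemma grad_ineq_aux {E : Type*} [NormedAddCommGroup E] [InnerProductSpace ℝ E]
    [CompleteSpace E] {φ : E → ℝ}
    (hconv : ConvexOn ℝ Set.univ φ) (hdiff : Differentiable ℝ φ) (x z : E) :
    φ x + ⟪gradient φ x, z - x⟫ ≤ φ z := by
  have hA : ConvexOn ℝ Set.univ (fun t : ℝ => φ (t • (z - x) + x)) := by
    have h := hconv.comp_affineMap (AffineMap.lineMap x z)
    have : ∀ t : ℝ, (AffineMap.lineMap x z) t = t • (z - x) + x := by
      intro t; simp [AffineMap.lineMap_apply]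
    simpa [Function.comp_def, this] using h
  have h1 : HasDerivAt (fun t : ℝ => t • (z - x) + x) (z - x) 0 := by
    simpa using ((hasDerivAt_id (0:ℝ)).smul_const (z - x)).add_const x
  have h2 : HasFDerivAt φ (InnerProductSpace.toDual ℝ E (gradient φ x)) x :=
    hasGradientAt_iff_hasFDerivAt.mp (hdiff x).hasGradientAt
  have hd : HasDerivAt (fun t : ℝ => φ (t • (z - x) + x)) ⟪gradient φ x, z - x⟫ 0 := by
    have := h2.comp_hasDerivAt_of_eq 0 h1 (by simp)
    simpa [InnerProductSpace.toDual_apply_apply, Function.comp_def] using this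
  have hs := hA.le_slope_of_hasDerivAt (Set.mem_univ (0:ℝ)) (Set.mem_univ (1:ℝ)) zero_lt_one hd
  rw [slope_def_field] at hs
  simp only [zero_smul, one_smul, zero_add, sub_add_cancel] at hs
  have : (φ z - φ x) / (1 - 0) = φ z - φ x := by norm_num
  rw [this] at hs
  linarith

/-- Sufficiency direction of Brenier's theorem: a transport map from `μ` to `ν`
that is the gradient of a convex differentiable function minimizes the
quadratic Monge cost among all transport maps from `μ` to `ν`. -/
theorem brenier_sufficiency
    (d : ℕ) (μ ν : Measure (EuclideanSpace ℝ (Fin d)))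
    [IsProbabilityMeasure μ] [IsProbabilityMeasure ν]
    (hμbdd : ∃ K : Set (EuclideanSpace ℝ (Fin d)), Bornology.IsBounded K ∧ μ Kᶜ = 0)
    (hνbdd : ∃ K : Set (EuclideanSpace ℝ (Fin d)), Bornology.IsBounded K ∧ ν Kᶜ = 0)
    (hμac : μ ≪ (volume : Measure (EuclideanSpace ℝ (Fin d))))
    (f : EuclideanSpace ℝ (Fin d) → EuclideanSpace ℝ (Fin d))
    (hf : Measurable f) (hmap : Measure.map f μ = ν)
    (φ : EuclideanSpace ℝ (Fin d) → ℝ)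
    (hφconv : ConvexOn ℝ Set.univ φ) (hφdiff : Differentiable ℝ φ)
    (hgrad : ∀ x, f x = gradient φ x) :
    ∀ g : EuclideanSpace ℝ (Fin d) → EuclideanSpace ℝ (Fin d),
      Measurable g → Measure.map g μ = ν →
      ∫ x, ‖x - f x‖ ^ 2 ∂μ ≤ ∫ x, ‖x - g x‖ ^ 2 ∂μ := by
  intro g hg hgmap
  obtain ⟨K₁, hK₁b, hK₁0⟩ := hμbdd
  obtain ⟨K₂, hK₂b, hK₂0⟩ := hνbdd
  set A := closure K₁ with hAdef
  set B := closure K₂ with hBdef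
  have hAc : IsCompact A := hK₁b.isCompact_closure
  have hBc : IsCompact B := hK₂b.isCompact_closure
  have hμA : μ Aᶜ = 0 :=
    measure_mono_null (Set.compl_subset_compl.2 subset_closure) hK₁0
  have hνB : ν Bᶜ = 0 :=
    measure_mono_null (Set.compl_subset_compl.2 subset_closure) hK₂0
  have hAne : A.Nonempty := by
    rcases Set.eq_empty_or_nonempty A with h | h
    · exfalso
      have : μ Set.univ = 0 := by
        simpa [h] using hμA
      simp at this
    · exact h
  have hφc : Continuous φ := hφdiff.continuous
  -- radii
  obtain ⟨R, hR0, hRA⟩ : ∃ R : ℝ, 0 ≤ R ∧ A ⊆ Metric.closedBall 0 R := by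
    obtain ⟨r, hr⟩ := hAc.isBounded.subset_closedBall 0
    exact ⟨max r 0, le_max_right _ _,
      hr.trans (Metric.closedBall_subset_closedBall (le_max_left _ _))⟩
  obtain ⟨r, hr0, hrB⟩ : ∃ r : ℝ, 0 ≤ r ∧ B ⊆ Metric.closedBall 0 r := by
    obtain ⟨r, hr⟩ := hBc.isBounded.subset_closedBall 0
    exact ⟨max r 0, le_max_right _ _,
      hr.trans (Metric.closedBall_subset_closedBall (le_max_left _ _))⟩
  have hnormA : ∀ x ∈ A, ‖x‖ ≤ R := by
    intro x hx; simpa [mem_closedBall_zero_iff] using hRA hx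
  have hnormB : ∀ y ∈ B, ‖y‖ ≤ r := by
    intro y hy; simpa [mem_closedBall_zero_iff] using hrB hy
  -- the conjugate-type function
  set ψ : EuclideanSpace ℝ (Fin d) → ℝ :=
    fun y => sSup ((fun x => ⟪x, y⟫ - φ x) '' A) with hψdef
  have hcont : ∀ y, Continuous fun x : EuclideanSpace ℝ (Fin d) => ⟪x, y⟫ - φ x := by
    intro y
    exact (continuous_id.inner continuous_const).sub hφc
  have hbdd : ∀ y, BddAbove ((fun x => ⟪x, y⟫ - φ x) '' A) := by
    intro y; exact (hAc.image (hcont y)).bddAbove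
  have hne : ∀ y, ((fun x => ⟪x, y⟫ - φ x) '' A).Nonempty := fun y => hAne.image _
  have hle : ∀ x ∈ A, ∀ y, ⟪x, y⟫ - φ x ≤ ψ y := by
    intro x hx y
    exact le_csSup (hbdd y) ⟨x, hx, rfl⟩
  have hψf : ∀ x ∈ A, ψ (f x) = ⟪x, f x⟫ - φ x := by
    intro x hx
    refine le_antisymm (csSup_le (hne _) ?_) (hle x hx (f x))
    rintro s ⟨z, hz, rfl⟩
    dsimp only
    have hgi := grad_ineq_aux hφconv hφdiff x z
    rw [← hgrad x, inner_sub_right] at hgi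
    have h1 : ⟪z, f x⟫ = ⟪f x, z⟫ := real_inner_comm _ _
    have h2 : ⟪x, f x⟫ = ⟪f x, x⟫ := real_inner_comm _ _
    linarith
  -- ψ is Lipschitz
  have hLip1 : ∀ y y', ψ y ≤ ψ y' + R * ‖y - y'‖ := by
    intro y y'
    refine csSup_le (hne y) ?_
    rintro s ⟨z, hz, rfl⟩
    dsimp only
    have h1 : ⟪z, y⟫ - φ z = (⟪z, y'⟫ - φ z) + ⟪z, y - y'⟫ := by
      rw [inner_sub_right]; ring
    have h2 : ⟪z, y - y'⟫ ≤ R * ‖y - y'‖ := by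
      calc ⟪z, y - y'⟫ ≤ ‖z‖ * ‖y - y'‖ := real_inner_le_norm _ _
        _ ≤ R * ‖y - y'‖ := by
            exact mul_le_mul_of_nonneg_right (hnormA z hz) (norm_nonneg _)
    linarith [hle z hz y']
  have hψLip : LipschitzWith (Real.toNNReal R) ψ := by
    refine LipschitzWith.of_dist_le_mul fun y y' => ?_
    rw [Real.dist_eq, Real.coe_toNNReal R hR0, dist_eq_norm]
    rw [abs_sub_le_iff]
    constructor
    · have := hLip1 y y'; linarith
    · have := hLip1 y' y
      rw [norm_sub_rev] at this
      linarith
  have hψcont : Continuous ψ := hψLip.continuous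
  -- bounds
  obtain ⟨Cψ, hCψ⟩ : ∃ C, ∀ y ∈ B, ‖ψ y‖ ≤ C :=
    hBc.exists_bound_of_continuousOn hψcont.continuousOn
  obtain ⟨Cφ, hCφ⟩ : ∃ C, ∀ x ∈ A, ‖φ x‖ ≤ C :=
    hAc.exists_bound_of_continuousOn hφc.continuousOn
  -- a.e. membership
  have haeA : ∀ᵐ x ∂μ, x ∈ A := by
    rw [ae_iff]
    exact hμA
  have hBmeas : MeasurableSet B := hBc.isClosed.measurableSet
  have haef : ∀ᵐ x ∂μ, f x ∈ B := by
    rw [ae_iff]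
    have : μ (f ⁻¹' Bᶜ) = ν Bᶜ := by
      rw [← hmap, Measure.map_apply hf hBmeas.compl]
    exact this.trans hνB
  have haeg : ∀ᵐ x ∂μ, g x ∈ B := by
    rw [ae_iff]
    have : μ (g ⁻¹' Bᶜ) = ν Bᶜ := by
      rw [← hgmap, Measure.map_apply hg hBmeas.compl]
    exact this.trans hνB
  -- integrability helper
  have hint : ∀ (h : EuclideanSpace ℝ (Fin d) → ℝ), Measurable h →
      (∃ C, ∀ᵐ x ∂μ, ‖h x‖ ≤ C) → Integrable h μ := by
    rintro h hm ⟨C, hC⟩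
    exact Integrable.mono' (integrable_const C) hm.aestronglyMeasurable hC
  -- measurability facts
  have mφ : Measurable φ := hφc.measurable
  have mψ : Measurable ψ := hψcont.measurable
  have mif : Measurable fun x : EuclideanSpace ℝ (Fin d) => ⟪x, f x⟫ :=
    measurable_id.inner hf
  have mig : Measurable fun x : EuclideanSpace ℝ (Fin d) => ⟪x, g x⟫ :=
    measurable_id.inner hg
  -- integrability facts
  have iφ : Integrable φ μ := by
    refine hint _ mφ ⟨Cφ, ?_⟩
    filter_upwards [haeA] with x hx using hCφ x hx
  have iψf : Integrable (fun x => ψ (f x)) μ := by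
    refine hint _ (mψ.comp hf) ⟨Cψ, ?_⟩
    filter_upwards [haef] with x hx using hCψ _ hx
  have iψg : Integrable (fun x => ψ (g x)) μ := by
    refine hint _ (mψ.comp hg) ⟨Cψ, ?_⟩
    filter_upwards [haeg] with x hx using hCψ _ hx
  have iif : Integrable (fun x => ⟪x, f x⟫) μ := by
    refine hint _ mif ⟨R * r, ?_⟩
    filter_upwards [haeA, haef] with x hxA hxB
    calc ‖⟪x, f x⟫‖ ≤ ‖x‖ * ‖f x‖ := abs_real_inner_le_norm _ _
      _ ≤ R * r := by
          exact mul_le_mul (hnormA x hxA) (hnormB _ hxB) (norm_nonneg _) hR0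
  have iig : Integrable (fun x => ⟪x, g x⟫) μ := by
    refine hint _ mig ⟨R * r, ?_⟩
    filter_upwards [haeA, haeg] with x hxA hxB
    calc ‖⟪x, g x⟫‖ ≤ ‖x‖ * ‖g x‖ := abs_real_inner_le_norm _ _
      _ ≤ R * r := by
          exact mul_le_mul (hnormA x hxA) (hnormB _ hxB) (norm_nonneg _) hR0
  have inx : Integrable (fun x : EuclideanSpace ℝ (Fin d) => ‖x‖ ^ 2) μ := by
    refine hint _ (measurable_norm.pow_const 2) ⟨R ^ 2, ?_⟩
    filter_upwards [haeA] with x hx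
    rw [Real.norm_eq_abs, abs_of_nonneg (by positivity)]
    exact pow_le_pow_left₀ (norm_nonneg _) (hnormA x hx) 2
  have inf2 : Integrable (fun x => ‖f x‖ ^ 2) μ := by
    refine hint _ ((hf.norm).pow_const 2) ⟨r ^ 2, ?_⟩
    filter_upwards [haef] with x hx
    rw [Real.norm_eq_abs, abs_of_nonneg (by positivity)]
    exact pow_le_pow_left₀ (norm_nonneg _) (hnormB _ hx) 2
  have ing2 : Integrable (fun x => ‖g x‖ ^ 2) μ := by
    refine hint _ ((hg.norm).pow_const 2) ⟨r ^ 2, ?_⟩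
    filter_upwards [haeg] with x hx
    rw [Real.norm_eq_abs, abs_of_nonneg (by positivity)]
    exact pow_le_pow_left₀ (norm_nonneg _) (hnormB _ hx) 2
  -- key inequality ∫⟪x,g x⟫ ≤ ∫⟪x,f x⟫
  have key : ∫ x, ⟪x, g x⟫ ∂μ ≤ ∫ x, ⟪x, f x⟫ ∂μ := by
    have e1 : ∫ x, ⟪x, g x⟫ ∂μ ≤ ∫ x, (φ x + ψ (g x)) ∂μ := by
      refine integral_mono_ae iig (iφ.add iψg) ?_
      filter_upwards [haeA] with x hx
      have := hle x hx (g x)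
      linarith
    have e2 : ∫ x, ψ (g x) ∂μ = ∫ y, ψ y ∂ν := by
      rw [← hgmap, integral_map hg.aemeasurable hψcont.aestronglyMeasurable]
    have e3 : ∫ y, ψ y ∂ν = ∫ x, ψ (f x) ∂μ := by
      rw [← hmap, integral_map hf.aemeasurable hψcont.aestronglyMeasurable]
    have e4 : ∫ x, (φ x + ψ (f x)) ∂μ = ∫ x, ⟪x, f x⟫ ∂μ := by
      refine integral_congr_ae ?_
      filter_upwards [haeA] with x hx
      rw [hψf x hx]; ring
    calc ∫ x, ⟪x, g x⟫ ∂μ ≤ ∫ x, (φ x + ψ (g x)) ∂μ := e1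
      _ = ∫ x, φ x ∂μ + ∫ x, ψ (g x) ∂μ := integral_add iφ iψg
      _ = ∫ x, φ x ∂μ + ∫ x, ψ (f x) ∂μ := by rw [e2, e3]
      _ = ∫ x, (φ x + ψ (f x)) ∂μ := (integral_add iφ iψf).symm
      _ = ∫ x, ⟪x, f x⟫ ∂μ := e4
  -- equality of second moments
  have nfg : ∫ x, ‖f x‖ ^ 2 ∂μ = ∫ x, ‖g x‖ ^ 2 ∂μ := by
    have hsm : AEStronglyMeasurable (fun y : EuclideanSpace ℝ (Fin d) => ‖y‖ ^ 2) ν :=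
      (continuous_norm.pow 2).aestronglyMeasurable
    have e1 : ∫ x, ‖f x‖ ^ 2 ∂μ = ∫ y, ‖y‖ ^ 2 ∂ν := by
      rw [← hmap, integral_map hf.aemeasurable]
      rw [hmap]; exact hsm
    have e2 : ∫ x, ‖g x‖ ^ 2 ∂μ = ∫ y, ‖y‖ ^ 2 ∂ν := by
      rw [← hgmap, integral_map hg.aemeasurable]
      rw [hgmap]; exact hsm
    rw [e1, e2]
  -- expansion
  have expand : ∀ (h : EuclideanSpace ℝ (Fin d) → EuclideanSpace ℝ (Fin d)),
      Measurable h → Integrable (fun x => ⟪x, h x⟫) μ →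
      Integrable (fun x => ‖h x‖ ^ 2) μ →
      ∫ x, ‖x - h x‖ ^ 2 ∂μ
        = ∫ x, ‖x‖ ^ 2 ∂μ - 2 * ∫ x, ⟪x, h x⟫ ∂μ + ∫ x, ‖h x‖ ^ 2 ∂μ := by
    intro h hm hi1 hi2
    have e : ∀ x, ‖x - h x‖ ^ 2 = ‖x‖ ^ 2 - 2 * ⟪x, h x⟫ + ‖h x‖ ^ 2 := by
      intro x
      exact norm_sub_sq_real x (h x)
    have iB : Integrable (fun x => 2 * ⟪x, h x⟫) μ := hi1.const_mul 2
    have iA : Integrable (fun x => ‖x‖ ^ 2 - 2 * ⟪x, h x⟫) μ := inx.sub iB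
    rw [integral_congr_ae (Filter.Eventually.of_forall fun x => e x)]
    rw [integral_add iA hi2, integral_sub inx iB, integral_const_mul 2 fun x => ⟪x, h x⟫]
  rw [expand f hf iif inf2, expand g hg iig ing2, nfg]
  linarith
end

section
/- Let I₀, I₁ : ℝ^d → [0,∞) be measurable densities and let f₁ : ℝ^d → ℝ^d be measurable with Measure.map f₁ (volume.withDensity I₀) = volume.withDensity I₁, and suppose f₁(x) = ∇φ₁(x) for all x, where φ₁ : ℝ^d → ℝ is convex and differentiable. Fix μ ∈ ℝ^d and define the translated density I_μ(y) = I₁(y − μ). Then the map f_μ(x) = f₁(x) + μ satisfies Measure.map f_μ (volume.withDensity I₀) = volume.withDensity I_μ; moreover f_μ is the gradient of the convex differentiable function x ↦ φ₁(x) + ⟨μ, x⟩; and consequently the LOT transform of I_μ with respect to I₀ satisfies Î_μ(x) = (f_μ(x) − x)·√(I₀(x)) = Î₁(x) + μ·√(I₀(x)) for all x, where Î₁(x) = (f₁(x) − x)·√(I₀(x)). -/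
open MeasureTheory
open scoped RealInnerProductSpace

lemma map_add_withDensity {d : ℕ} (g : EuclideanSpace ℝ (Fin d) → ENNReal)
    (hg : Measurable g) (μ : EuclideanSpace ℝ (Fin d)) :
    Measure.map (fun y => y + μ) (volume.withDensity g)
      = volume.withDensity (fun y => g (y - μ)) := by
  ext s hs
  rw [Measure.map_apply (measurable_add_const μ) hs,
    withDensity_apply _ (hs.preimage (measurable_add_const μ)),
    withDensity_apply _ hs]
  have hmp : Measure.map (fun y => y + μ) (volume : Measure (EuclideanSpace ℝ (Fin d))) = volume :=
    (measurePreserving_add_right volume μ).map_eq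
  symm
  calc ∫⁻ y in s, g (y - μ) ∂volume
      = ∫⁻ y in s, g (y - μ) ∂(Measure.map (fun y => y + μ) volume) := by rw [hmp]
    _ = ∫⁻ x in (fun y => y + μ) ⁻¹' s, g (x + μ - μ) ∂volume := by
        exact setLIntegral_map hs
          (show Measurable fun y => g (y - μ) from hg.comp (measurable_sub_const μ))
          (measurable_add_const μ)
    _ = ∫⁻ x in (fun y => y + μ) ⁻¹' s, g x ∂volume := by simp

/-- Translation property of the LOT transform: if `f₁ = ∇φ₁` transports `I₀`
onto `I₁`, then `f_μ = f₁ + μ` transports `I₀` onto the translated density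
`I_μ(y) = I₁(y - μ)`, it is the gradient of the convex differentiable potential
`x ↦ φ₁(x) + ⟨μ, x⟩`, and the LOT transform satisfies
`Î_μ(x) = Î₁(x) + μ √(I₀ x)`. -/
theorem lot_translation
    (d : ℕ) (I₀ I₁ : EuclideanSpace ℝ (Fin d) → ℝ)
    (hI₀m : Measurable I₀) (hI₁m : Measurable I₁)
    (hI₀nonneg : ∀ x, 0 ≤ I₀ x) (hI₁nonneg : ∀ x, 0 ≤ I₁ x)
    (f₁ : EuclideanSpace ℝ (Fin d) → EuclideanSpace ℝ (Fin d))
    (hf₁ : Measurable f₁)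
    (hmap : Measure.map f₁ (volume.withDensity fun x => ENNReal.ofReal (I₀ x))
      = volume.withDensity fun x => ENNReal.ofReal (I₁ x))
    (φ₁ : EuclideanSpace ℝ (Fin d) → ℝ)
    (hφ₁conv : ConvexOn ℝ Set.univ φ₁) (hφ₁diff : Differentiable ℝ φ₁)
    (hgrad : ∀ x, f₁ x = gradient φ₁ x)
    (μ : EuclideanSpace ℝ (Fin d)) :
    (Measure.map (fun x => f₁ x + μ)
        (volume.withDensity fun x => ENNReal.ofReal (I₀ x))
      = volume.withDensity fun y => ENNReal.ofReal (I₁ (y - μ))) ∧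
    (ConvexOn ℝ Set.univ (fun x => φ₁ x + ⟪μ, x⟫) ∧
      Differentiable ℝ (fun x => φ₁ x + ⟪μ, x⟫) ∧
      ∀ x, f₁ x + μ = gradient (fun x => φ₁ x + ⟪μ, x⟫) x) ∧
    (∀ x, Real.sqrt (I₀ x) • ((f₁ x + μ) - x)
      = Real.sqrt (I₀ x) • (f₁ x - x) + Real.sqrt (I₀ x) • μ) := by
  have hkey : ∀ x, HasGradientAt (fun x => φ₁ x + ⟪μ, x⟫) (gradient φ₁ x + μ) x := by
    intro x
    rw [hasGradientAt_iff_hasFDerivAt]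
    have h1 : HasFDerivAt φ₁
        (InnerProductSpace.toDual ℝ _ (gradient φ₁ x)) x :=
      ((hφ₁diff x).hasGradientAt).hasFDerivAt
    have h2 : HasFDerivAt (fun y : EuclideanSpace ℝ (Fin d) => ⟪μ, y⟫)
        (InnerProductSpace.toDual ℝ _ μ) x := by
      have hco : (fun y : EuclideanSpace ℝ (Fin d) => ⟪μ, y⟫)
          = ⇑(InnerProductSpace.toDual ℝ (EuclideanSpace ℝ (Fin d)) μ) := by
        funext y; simp [InnerProductSpace.toDual_apply_apply]
      rw [hco]
      exact (InnerProductSpace.toDual ℝ (EuclideanSpace ℝ (Fin d)) μ).hasFDerivAt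
    rw [map_add]
    exact h1.add h2
  refine ⟨?_, ⟨?_, fun x => (hkey x).differentiableAt, fun x => ?_⟩, fun x => ?_⟩
  · have : (fun x => f₁ x + μ) = (fun y => y + μ) ∘ f₁ := rfl
    rw [this, ← Measure.map_map (measurable_add_const μ) hf₁, hmap]
    exact map_add_withDensity (fun x => ENNReal.ofReal (I₁ x))
      (ENNReal.measurable_ofReal.comp hI₁m) μ
  · have hlin : ConvexOn ℝ Set.univ (fun x : EuclideanSpace ℝ (Fin d) => ⟪μ, x⟫) := by
      have := ((innerSL ℝ μ :
        EuclideanSpace ℝ (Fin d) →L[ℝ] ℝ).toLinearMap).convexOn (convex_univ)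
      simpa using this
    exact hφ₁conv.add hlin
  · rw [hgrad x, (hkey x).gradient]
  · rw [add_sub_right_comm, smul_add]
end

section
/- Let I₀, I₁ : ℝ^d → [0,∞) be measurable densities and let f₁ : ℝ^d → ℝ^d be measurable with Measure.map f₁ (volume.withDensity I₀) = volume.withDensity I₁, and suppose f₁(x) = ∇φ₁(x) for all x, where φ₁ : ℝ^d → ℝ is convex and differentiable. Fix σ > 0 and define the scaled density I_σ(y) = σ^d · I₁(σ·y). Then the map f_σ(x) = f₁(x)/σ satisfies Measure.map f_σ (volume.withDensity I₀) = volume.withDensity I_σ; moreover f_σ is the gradient of the convex differentiable function x ↦ φ₁(x)/σ; and consequently the LOT transform of I_σ with respect to I₀ satisfies Î_σ(x) = (f_σ(x) − x)·√(I₀(x)) = (1/σ)·(Î₁(x) − (σ − 1)·x·√(I₀(x))) for all x, where Î₁(x) = (f₁(x) − x)·√(I₀(x)). -/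
open MeasureTheory

/-- Scaling property of the LOT transform: if `f₁ = ∇φ₁` transports `I₀` onto
`I₁` and `σ > 0`, then `f_σ = f₁ / σ` transports `I₀` onto the scaled density
`I_σ(y) = σ^d I₁(σ y)`, it is the gradient of the convex differentiable
potential `x ↦ φ₁(x)/σ`, and the LOT transform satisfies
`Î_σ(x) = (1/σ)(Î₁(x) - (σ - 1) x √(I₀ x))`. -/
theorem lot_scaling
    (d : ℕ) (I₀ I₁ : EuclideanSpace ℝ (Fin d) → ℝ)
    (hI₀m : Measurable I₀) (hI₁m : Measurable I₁)
    (hI₀nonneg : ∀ x, 0 ≤ I₀ x) (hI₁nonneg : ∀ x, 0 ≤ I₁ x)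
    (f₁ : EuclideanSpace ℝ (Fin d) → EuclideanSpace ℝ (Fin d))
    (hf₁ : Measurable f₁)
    (hmap : Measure.map f₁ (volume.withDensity fun x => ENNReal.ofReal (I₀ x))
      = volume.withDensity fun x => ENNReal.ofReal (I₁ x))
    (φ₁ : EuclideanSpace ℝ (Fin d) → ℝ)
    (hφ₁conv : ConvexOn ℝ Set.univ φ₁) (hφ₁diff : Differentiable ℝ φ₁)
    (hgrad : ∀ x, f₁ x = gradient φ₁ x)
    (σ : ℝ) (hσ : 0 < σ) :
    (Measure.map (fun x => σ⁻¹ • f₁ x)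
        (volume.withDensity fun x => ENNReal.ofReal (I₀ x))
      = volume.withDensity fun y => ENNReal.ofReal (σ ^ d * I₁ (σ • y))) ∧
    (ConvexOn ℝ Set.univ (fun x => φ₁ x / σ) ∧
      Differentiable ℝ (fun x => φ₁ x / σ) ∧
      ∀ x, σ⁻¹ • f₁ x = gradient (fun x => φ₁ x / σ) x) ∧
    (∀ x, Real.sqrt (I₀ x) • (σ⁻¹ • f₁ x - x)
      = σ⁻¹ • (Real.sqrt (I₀ x) • (f₁ x - x) - (σ - 1) • (Real.sqrt (I₀ x) • x))) := by
  have hσne : σ ≠ 0 := hσ.ne'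
  refine ⟨?_, ⟨?_, ?_, ?_⟩, ?_⟩
  · -- transport property
    have hT : Measurable fun y : EuclideanSpace ℝ (Fin d) => σ⁻¹ • y :=
      measurable_const_smul σ⁻¹
    have hcomp : Measure.map (fun x => σ⁻¹ • f₁ x)
        (volume.withDensity fun x => ENNReal.ofReal (I₀ x))
        = Measure.map (fun y => σ⁻¹ • y)
            (volume.withDensity fun x => ENNReal.ofReal (I₁ x)) := by
      rw [← hmap, Measure.map_map hT hf₁]; rfl
    rw [hcomp]
    ext s hs
    rw [Measure.map_apply hT hs, withDensity_apply _ (hT hs),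
      withDensity_apply _ hs]
    have hmeas : Measurable fun y : EuclideanSpace ℝ (Fin d) =>
        ENNReal.ofReal (I₁ (σ • y)) :=
      (hI₁m.comp (measurable_const_smul σ)).ennreal_ofReal
    have key : ∀ x : EuclideanSpace ℝ (Fin d),
        ENNReal.ofReal (I₁ x) = ENNReal.ofReal (I₁ (σ • σ⁻¹ • x)) := by
      intro x; rw [smul_inv_smul₀ hσne]
    calc ∫⁻ x in (fun y => σ⁻¹ • y) ⁻¹' s, ENNReal.ofReal (I₁ x)
        = ∫⁻ x in (fun y => σ⁻¹ • y) ⁻¹' s,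
            ENNReal.ofReal (I₁ (σ • σ⁻¹ • x)) := by
          exact lintegral_congr fun x => key x
      _ = ∫⁻ y in s, ENNReal.ofReal (I₁ (σ • y))
            ∂(Measure.map (fun y => σ⁻¹ • y) volume) := by
          rw [setLIntegral_map hs hmeas hT]
      _ = ∫⁻ y in s, ENNReal.ofReal (I₁ (σ • y))
            ∂(ENNReal.ofReal |(σ⁻¹ ^ (Module.finrank ℝ (EuclideanSpace ℝ (Fin d))))⁻¹| • volume) := by
          rw [Measure.map_addHaar_smul volume (inv_ne_zero hσne)]
      _ = ∫⁻ y in s, ENNReal.ofReal (σ ^ d * I₁ (σ • y)) := by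
          rw [Measure.restrict_smul, lintegral_smul_measure]
          have hd : Module.finrank ℝ (EuclideanSpace ℝ (Fin d)) = d := by
            simp [finrank_euclideanSpace_fin]
          rw [hd]
          have habs : |(σ⁻¹ ^ d)⁻¹| = σ ^ d := by
            rw [abs_of_pos (by positivity), inv_pow, inv_inv]
          rw [habs]
          rw [smul_eq_mul, ← lintegral_const_mul _ hmeas]
          congr 1; funext y
          rw [← ENNReal.ofReal_mul (pow_nonneg hσ.le d)]
  · -- convexity
    have := hφ₁conv.smul (c := σ⁻¹) (inv_pos.mpr hσ).le
    have heq : (fun x => φ₁ x / σ) = fun x => σ⁻¹ • φ₁ x := by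
      funext x; simp [div_eq_inv_mul]
    rw [heq]; exact this
  · -- differentiability
    simpa [div_eq_mul_inv] using hφ₁diff.mul_const σ⁻¹
  · -- gradient
    intro x
    have h1 : HasGradientAt φ₁ (gradient φ₁ x) x := (hφ₁diff x).hasGradientAt
    have h2 : HasFDerivAt φ₁ ((InnerProductSpace.toDual ℝ _) (gradient φ₁ x)) x :=
      hasGradientAt_iff_hasFDerivAt.mp h1
    have h3 : HasFDerivAt (fun x => φ₁ x / σ)
        (σ⁻¹ • (InnerProductSpace.toDual ℝ _) (gradient φ₁ x)) x := by
      simpa [div_eq_mul_inv] using h2.mul_const σ⁻¹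
    have h4 : HasGradientAt (fun x => φ₁ x / σ) (σ⁻¹ • gradient φ₁ x) x := by
      rw [hasGradientAt_iff_hasFDerivAt]
      have he : (InnerProductSpace.toDual ℝ (EuclideanSpace ℝ (Fin d))) (σ⁻¹ • gradient φ₁ x)
          = σ⁻¹ • (InnerProductSpace.toDual ℝ (EuclideanSpace ℝ (Fin d))) (gradient φ₁ x) := by
        simp
      rw [he]; exact h3
    rw [hgrad x, h4.gradient]
  · -- algebraic identity
    intro x
    match_scalars <;> field_simp <;> ring
end

section
/- Let I₀, I₁ : ℝ^d → [0,∞) be measurable densities with I₀(x) > 0 for all x, and let f₁ : ℝ^d → ℝ^d be measurable with Measure.map f₁ (volume.withDensity I₀) = volume.withDensity I₁. Let g : ℝ^d → ℝ^d be a bijective measurable map with measurable inverse g⁻¹, and let I_g : ℝ^d → [0,∞) be any density with Measure.map g (volume.withDensity I_g) = volume.withDensity I₁. Then the composed map f_g = g⁻¹ ∘ f₁ satisfies Measure.map f_g (volume.withDensity I₀) = volume.withDensity I_g, and its LOT transform with respect to I₀ satisfies Î_g(x) = (g⁻¹(Î₁(x)/√(I₀(x)) + x) − x)·√(I₀(x))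 for all x, where Î₁(x) = (f₁(x) − x)·√(I₀(x)). -/
open MeasureTheory

/-- Composition property of the LOT transform: if `f₁` transports `I₀` onto
`I₁`, `g` is a bijective measurable map with measurable inverse `ginv`, and
`I_g` is a density with `g` pushing `I_g` forward onto `I₁`, then
`f_g = g⁻¹ ∘ f₁` transports `I₀` onto `I_g` and the LOT transform satisfies
`Î_g(x) = (g⁻¹(Î₁(x)/√(I₀ x) + x) - x) √(I₀ x)`. -/
theorem lot_composition
    (d : ℕ) (I₀ I₁ Ig : EuclideanSpace ℝ (Fin d) → ℝ)
    (hI₀m : Measurable I₀) (hI₁m : Measurable I₁) (hIgm : Measurable Ig)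
    (hI₀pos : ∀ x, 0 < I₀ x) (hI₁nonneg : ∀ x, 0 ≤ I₁ x) (hIgnonneg : ∀ x, 0 ≤ Ig x)
    (f₁ : EuclideanSpace ℝ (Fin d) → EuclideanSpace ℝ (Fin d))
    (hf₁ : Measurable f₁)
    (hmap₁ : Measure.map f₁ (volume.withDensity fun x => ENNReal.ofReal (I₀ x))
      = volume.withDensity fun x => ENNReal.ofReal (I₁ x))
    (g ginv : EuclideanSpace ℝ (Fin d) → EuclideanSpace ℝ (Fin d))
    (hg : Measurable g) (hginv : Measurable ginv)
    (hgli : Function.LeftInverse ginv g) (hgri : Function.RightInverse ginv g)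
    (hmapg : Measure.map g (volume.withDensity fun x => ENNReal.ofReal (Ig x))
      = volume.withDensity fun x => ENNReal.ofReal (I₁ x)) :
    (Measure.map (ginv ∘ f₁) (volume.withDensity fun x => ENNReal.ofReal (I₀ x))
      = volume.withDensity fun x => ENNReal.ofReal (Ig x)) ∧
    (∀ x, Real.sqrt (I₀ x) • (ginv (f₁ x) - x)
      = Real.sqrt (I₀ x) •
          (ginv ((Real.sqrt (I₀ x))⁻¹ • (Real.sqrt (I₀ x) • (f₁ x - x)) + x) - x)) := by
  constructor
  · rw [← Measure.map_map hginv hf₁, hmap₁, ← hmapg,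
      Measure.map_map hginv hg]
    have : ginv ∘ g = id := funext hgli
    rw [this, Measure.map_id]
  · intro x
    have hs : Real.sqrt (I₀ x) ≠ 0 :=
      ne_of_gt (Real.sqrt_pos.mpr (hI₀pos x))
    rw [inv_smul_smul₀ hs, sub_add_cancel]
end

section
/- Let I₀, p₀, q₀ : ℝ^d → [0,∞) be measurable densities with I₀(x) > 0 for all x, and let f₀, g₀ : ℝ^d → ℝ^d be measurable maps with Measure.map f₀ (volume.withDensity I₀) = volume.withDensity p₀ and Measure.map g₀ (volume.withDensity I₀) = volume.withDensity q₀. Let H be a set of bijective measurable maps h : ℝ^d → ℝ^d with measurable inverses, satisfying: (i) h ∈ H implies h⁻¹ ∈ H; (ii) for every finite family h₁,…,h_n ∈ H and real weights α₁,…,α_n with Σ αᵢ = 1, the pointwise combination x ↦ Σ αᵢ·hᵢ(x) belongs to H; (iii) h₁, h₂ ∈ H implies h₁ ∘ h₂ ∈ H. Assume that for every h ∈ H, Measure.map h (volume.withDensity p₀) ≠ volume.withDensity q₀ (the classes do not overlap). Then the convex hulls of the two transformed classes are disjoint: for every finite families h₁,…,h_m ∈ H and h'₁,…,h'_n ∈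 H and convex weights α₁,…,α_m > 0 with Σ αᵢ = 1 and β₁,…,β_n > 0 with Σ βⱼ = 1, the functions x ↦ Σᵢ αᵢ·(hᵢ⁻¹(f₀(x)) − x)·√(I₀(x)) and x ↦ Σⱼ βⱼ·(h'ⱼ⁻¹(g₀(x)) − x)·√(I₀(x)) are not equal as functions ℝ^d → ℝ^d. -/
open MeasureTheory

/-- Linear separability in LOT space (Theorem 2 of the paper): under the
generative model where the two classes are generated from mother densities
`p₀` and `q₀` by the maps of a family `H` closed under inversion, convex
combinations and composition, and where the classes do not overlap, the
convex hulls of the LOT transforms of the two classes are disjoint. -/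
theorem lot_linear_separability
    (d : ℕ) (I₀ p₀ q₀ : EuclideanSpace ℝ (Fin d) → ℝ)
    (hI₀m : Measurable I₀) (hp₀m : Measurable p₀) (hq₀m : Measurable q₀)
    (hI₀pos : ∀ x, 0 < I₀ x) (hp₀nonneg : ∀ x, 0 ≤ p₀ x) (hq₀nonneg : ∀ x, 0 ≤ q₀ x)
    (f₀ g₀ : EuclideanSpace ℝ (Fin d) → EuclideanSpace ℝ (Fin d))
    (hf₀ : Measurable f₀) (hg₀ : Measurable g₀)
    (hmapf₀ : Measure.map f₀ (volume.withDensity fun x => ENNReal.ofReal (I₀ x))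
      = volume.withDensity fun x => ENNReal.ofReal (p₀ x))
    (hmapg₀ : Measure.map g₀ (volume.withDensity fun x => ENNReal.ofReal (I₀ x))
      = volume.withDensity fun x => ENNReal.ofReal (q₀ x))
    (H : Set (EuclideanSpace ℝ (Fin d) → EuclideanSpace ℝ (Fin d)))
    (hHgood : ∀ h ∈ H, Measurable h ∧ Function.Bijective h ∧
      Measurable (Function.invFun h))
    (hHinv : ∀ h ∈ H, Function.invFun h ∈ H)
    (hHcomb : ∀ (n : ℕ) (h : Fin n → EuclideanSpace ℝ (Fin d) → EuclideanSpace ℝ (Fin d))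
      (α : Fin n → ℝ), (∀ i, h i ∈ H) → (∑ i, α i) = 1 →
      (fun x => ∑ i, α i • h i x) ∈ H)
    (hHcomp : ∀ h₁ ∈ H, ∀ h₂ ∈ H, h₁ ∘ h₂ ∈ H)
    (hnonoverlap : ∀ h ∈ H,
      Measure.map h (volume.withDensity fun x => ENNReal.ofReal (p₀ x))
        ≠ volume.withDensity fun x => ENNReal.ofReal (q₀ x)) :
    ∀ (m n : ℕ)
      (h : Fin m → EuclideanSpace ℝ (Fin d) → EuclideanSpace ℝ (Fin d))
      (h' : Fin n → EuclideanSpace ℝ (Fin d) → EuclideanSpace ℝ (Fin d))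
      (α : Fin m → ℝ) (β : Fin n → ℝ),
      (∀ i, h i ∈ H) → (∀ j, h' j ∈ H) →
      (∀ i, 0 < α i) → (∑ i, α i) = 1 →
      (∀ j, 0 < β j) → (∑ j, β j) = 1 →
      (fun x => ∑ i, α i • (Real.sqrt (I₀ x) • (Function.invFun (h i) (f₀ x) - x)))
        ≠ (fun x => ∑ j, β j • (Real.sqrt (I₀ x) • (Function.invFun (h' j) (g₀ x) - x))) := by

  intro m n h h' α β hhH hh'H hαpos hαsum hβpos hβsum hEq
  set A : EuclideanSpace ℝ (Fin d) → EuclideanSpace ℝ (Fin d) :=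
    fun x => ∑ i, α i • Function.invFun (h i) x with hA
  set B : EuclideanSpace ℝ (Fin d) → EuclideanSpace ℝ (Fin d) :=
    fun x => ∑ j, β j • Function.invFun (h' j) x with hB
  have hAH : A ∈ H := hHcomb m _ α (fun i => hHinv _ (hhH i)) hαsum
  have hBH : B ∈ H := hHcomb n _ β (fun j => hHinv _ (hh'H j)) hβsum
  have key : ∀ x, A (f₀ x) = B (g₀ x) := by
    intro x
    have hx := congrFun hEq x
    have hs : (0:ℝ) < Real.sqrt (I₀ x) := Real.sqrt_pos.mpr (hI₀pos x)
    have h1 : ∑ i, α i • (Real.sqrt (I₀ x) • (Function.invFun (h i) (f₀ x) - x))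
        = Real.sqrt (I₀ x) • (A (f₀ x) - x) := by
      rw [hA]
      simp only [smul_sub, smul_comm (α _) (Real.sqrt (I₀ x)), Finset.sum_sub_distrib,
        ← Finset.smul_sum, ← Finset.sum_smul, hαsum, one_smul]
    have h2 : ∑ j, β j • (Real.sqrt (I₀ x) • (Function.invFun (h' j) (g₀ x) - x))
        = Real.sqrt (I₀ x) • (B (g₀ x) - x) := by
      rw [hB]
      simp only [smul_sub, smul_comm (β _) (Real.sqrt (I₀ x)), Finset.sum_sub_distrib,
        ← Finset.smul_sum, ← Finset.sum_smul, hβsum, one_smul]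
    rw [h1, h2] at hx
    have := smul_right_injective (EuclideanSpace ℝ (Fin d)) (ne_of_gt hs) hx
    exact sub_left_injective this
  obtain ⟨hAm, hAbij, hAinvm⟩ := hHgood A hAH
  obtain ⟨hBm, hBbij, hBinvm⟩ := hHgood B hBH
  have e3 : A ∘ f₀ = B ∘ g₀ := funext key
  have e1 : Measure.map A (volume.withDensity fun x => ENNReal.ofReal (p₀ x))
      = Measure.map B (volume.withDensity fun x => ENNReal.ofReal (q₀ x)) := by
    rw [← hmapf₀, ← hmapg₀, Measure.map_map hAm hf₀, Measure.map_map hBm hg₀, e3]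
  have hCH : Function.invFun B ∘ A ∈ H := hHcomp _ (hHinv B hBH) _ hAH
  refine hnonoverlap _ hCH ?_
  have hBinvB : Function.invFun B ∘ B = id :=
    funext fun x => Function.leftInverse_invFun hBbij.1 x
  rw [← Measure.map_map hBinvm hAm, e1, Measure.map_map hBinvm hBm, hBinvB, Measure.map_id]
end
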